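/- Let θ, x, z solve x' = cos θ, z' = sin θ, z > 0, with θ'(s) = 2(1 − a cos θ(s) + b sin²θ(s)) / (z(s)(a + 2b cos θ(s))), θ(0) = 0, a = 1. Then θ ≡ 0, so z is constant and the surface is a horosphere. -/

import Mathlib

open Real

private lemma one_sub_cos_le_abs (t : ℝ) : 1 - Real.cos t ≤ |t| := by
  have h1 := Real.cos_sq (t / 2)
  have h2 := Real.sin_sq_add_cos_sq (t / 2)
  have h3 : |Real.sin (t / 2)| ≤ |t / 2| := Real.abs_sin_le_abs
  have h4 : Real.sin (t / 2) ^ 2 ≤ |Real.sin (t / 2)| := by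
    have h5 : |Real.sin (t / 2)| ≤ 1 :=
      abs_le.2 ⟨Real.neg_one_le_sin _, Real.sin_le_one _⟩
    nlinarith [abs_nonneg (Real.sin (t / 2)), sq_abs (Real.sin (t / 2))]
  have h6 : (2 : ℝ) * (t / 2) = t := by ring
  rw [h6] at h1
  have h7 : |t / 2| = |t| / 2 := by rw [abs_div]; norm_num
  nlinarith

private lemma gron_zero {θ θd : ℝ → ℝ} {K a c : ℝ}
    (hθ : ∀ s, HasDerivAt θ (θd s) s)
    (hbound : ∀ s ∈ Set.Icc a c, |θd s| ≤ K * |θ s|) (h0 : θ a = 0) :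
    ∀ s ∈ Set.Icc a c, θ s = 0 := by
  have hcont : Continuous θ :=
    continuous_iff_continuousAt.2 fun s => (hθ s).continuousAt
  intro s hs
  have := norm_le_gronwallBound_of_norm_deriv_right_le (f := θ) (f' := θd)
    (δ := 0) (K := K) (ε := 0) (a := a) (b := c)
    (hcont.continuousOn)
    (fun x _ => (hθ x).hasDerivWithinAt)
    (by simp [h0])
    (fun x hx => by
      have := hbound x ⟨hx.1, le_of_lt hx.2⟩
      simpa using this) s hs
  rw [gronwallBound_ε0_δ0] at this
  have h1 : |θ s| ≤ 0 := this
  have h2 : (0 : ℝ) ≤ |θ s| := abs_nonneg _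
  have : |θ s| = 0 := le_antisymm h1 h2
  exact abs_eq_zero.mp this

/-- Case `H + bK = 1` (`a = 1`), `θ(0) = 0`, `1 + 2b ≠ 0`: the solution is
`θ ≡ 0`, `z` constant, and the surface is a horosphere. -/
theorem stmt13 (b : ℝ) (hb : 1 + 2 * b ≠ 0) (θ x z θd : ℝ → ℝ)
    (hx : ∀ s, HasDerivAt x (Real.cos (θ s)) s)
    (hz : ∀ s, HasDerivAt z (Real.sin (θ s)) s)
    (hθ : ∀ s, HasDerivAt θ (θd s) s)
    (hzpos : ∀ s, 0 < z s)
    (hode : ∀ s, θd s = 2 * (1 - 1 * Real.cos (θ s) + b * Real.sin (θ s) ^ 2)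
      / (z s * (1 + 2 * b * Real.cos (θ s))))
    (hθ0 : θ 0 = 0) :
    (∀ s, θ s = 0) ∧ (∀ s, z s = z 0) := by
  have hcontθ : Continuous θ :=
    continuous_iff_continuousAt.2 fun s => (hθ s).continuousAt
  have hcontz : Continuous z :=
    continuous_iff_continuousAt.2 fun s => (hz s).continuousAt
  set D : ℝ := |1 + 2 * b| with hD
  have hDpos : 0 < D := abs_pos.mpr hb
  set ε : ℝ := D / (4 * (|b| + 1)) with hε
  have hεpos : 0 < ε := by
    apply div_pos hDpos
    positivity
  -- key pointwise bound
  have key : ∀ (m : ℝ), 0 < m → ∀ s, m < z s → |θ s| < ε →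
      |θd s| ≤ (4 * (1 + 2 * |b|) / (m * D)) * |θ s| := by
    intro m hm s hms hεs
    have hcos1 : Real.cos (θ s) ≤ 1 := Real.cos_le_one _
    have hcosm1 : -1 ≤ Real.cos (θ s) := Real.neg_one_le_cos _
    have h1c : 1 - Real.cos (θ s) ≤ |θ s| := one_sub_cos_le_abs _
    have h1cnn : 0 ≤ 1 - Real.cos (θ s) := by linarith
    -- numerator bound
    have hnum : |1 - 1 * Real.cos (θ s) + b * Real.sin (θ s) ^ 2|
        ≤ (1 + 2 * |b|) * |θ s| := by
      have hsin : Real.sin (θ s) ^ 2 = 1 - Real.cos (θ s) ^ 2 := by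
        have := Real.sin_sq_add_cos_sq (θ s); linarith
      have hfac : 1 - 1 * Real.cos (θ s) + b * Real.sin (θ s) ^ 2
          = (1 - Real.cos (θ s)) * (1 + b * (1 + Real.cos (θ s))) := by
        rw [hsin]; ring
      rw [hfac, abs_mul, abs_of_nonneg h1cnn]
      have h2 : |1 + b * (1 + Real.cos (θ s))| ≤ 1 + 2 * |b| := by
        have h3 : |b * (1 + Real.cos (θ s))| ≤ 2 * |b| := by
          rw [abs_mul]
          have : |1 + Real.cos (θ s)| ≤ 2 := by
            rw [abs_le]; constructor <;> linarith
          nlinarith [abs_nonneg b]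
        calc |1 + b * (1 + Real.cos (θ s))| ≤ |(1 : ℝ)| + |b * (1 + Real.cos (θ s))| :=
              abs_add_le _ _
          _ ≤ 1 + 2 * |b| := by rw [abs_one]; linarith
      calc (1 - Real.cos (θ s)) * |1 + b * (1 + Real.cos (θ s))|
          ≤ (1 - Real.cos (θ s)) * (1 + 2 * |b|) := by
            apply mul_le_mul_of_nonneg_left h2 h1cnn
        _ ≤ |θ s| * (1 + 2 * |b|) := by
            apply mul_le_mul_of_nonneg_right h1c
            positivity
        _ = (1 + 2 * |b|) * |θ s| := by ring
    -- denominator bound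
    have hden : D / 2 ≤ |1 + 2 * b * Real.cos (θ s)| := by
      have h1 : 1 + 2 * b * Real.cos (θ s) = (1 + 2 * b) - 2 * b * (1 - Real.cos (θ s)) := by
        ring
      have h2 : |2 * b * (1 - Real.cos (θ s))| ≤ 2 * |b| * |θ s| := by
        rw [abs_mul, abs_mul, abs_two, abs_of_nonneg h1cnn]
        have := mul_le_mul_of_nonneg_left h1c (by positivity : (0:ℝ) ≤ 2 * |b|)
        linarith
      have h3 : 2 * |b| * |θ s| ≤ D / 2 := by
        have h4 : 2 * |b| * |θ s| ≤ 2 * |b| * ε := by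
          apply mul_le_mul_of_nonneg_left (le_of_lt hεs) (by positivity)
        have h5 : 2 * |b| * ε ≤ D / 2 := by
          rw [hε, ← mul_div_assoc]
          rw [div_le_div_iff₀ (by positivity) (by norm_num : (0:ℝ) < 2)]
          nlinarith [mul_nonneg (abs_nonneg b) hDpos.le, hDpos.le]
        linarith
      calc D / 2 = D - D / 2 := by ring
        _ ≤ |1 + 2 * b| - |2 * b * (1 - Real.cos (θ s))| := by
            rw [← hD]; linarith
        _ ≤ |(1 + 2 * b) - 2 * b * (1 - Real.cos (θ s))| := by
            exact abs_sub_abs_le_abs_sub _ _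
        _ = |1 + 2 * b * Real.cos (θ s)| := by rw [← h1]
    -- combine
    rw [hode s, abs_div, abs_mul, abs_mul, abs_two,
      abs_of_pos (hzpos s)]
    have hdenpos : 0 < z s * |1 + 2 * b * Real.cos (θ s)| := by
      apply mul_pos (hzpos s)
      linarith [hDpos]
    have hdenlb : m * (D / 2) ≤ z s * |1 + 2 * b * Real.cos (θ s)| := by
      apply mul_le_mul (le_of_lt hms) hden (by linarith [hDpos]) (le_of_lt (hzpos s))
    have hnum2 : 2 * |1 - 1 * Real.cos (θ s) + b * Real.sin (θ s) ^ 2|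
        ≤ 2 * ((1 + 2 * |b|) * |θ s|) := by linarith
    calc 2 * |1 - 1 * Real.cos (θ s) + b * Real.sin (θ s) ^ 2|
          / (z s * |1 + 2 * b * Real.cos (θ s)|)
        ≤ 2 * ((1 + 2 * |b|) * |θ s|) / (m * (D / 2)) := by
          apply div_le_div₀ (by positivity) hnum2 (by positivity) hdenlb
      _ = (4 * (1 + 2 * |b|) / (m * D)) * |θ s| := by
          field_simp; ring
  -- local vanishing
  have local_zero : ∀ s₀ : ℝ, θ s₀ = 0 → ∃ r > 0,
      ∀ s ∈ Set.Icc (s₀ - r) (s₀ + r), θ s = 0 := by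
    intro s₀ h0
    set m : ℝ := z s₀ / 2 with hmdef
    have hm : 0 < m := by have := hzpos s₀; positivity
    have h1 : ∀ᶠ s in nhds s₀, m < z s :=
      Filter.Tendsto.eventually_const_lt (by rw [hmdef]; linarith [hzpos s₀])
        (hcontz.tendsto s₀)
    have h2 : ∀ᶠ s in nhds s₀, |θ s| < ε := by
      have ht : Filter.Tendsto (fun s => |θ s|) (nhds s₀) (nhds 0) := by
        have := (continuous_abs.comp hcontθ).tendsto s₀
        simpa [h0, Function.comp_def] using this
      exact Filter.Tendsto.eventually_lt_const hεpos ht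
    obtain ⟨r', hr', hball⟩ := Metric.eventually_nhds_iff.mp (h1.and h2)
    refine ⟨r' / 2, by positivity, ?_⟩
    have hsub : ∀ s ∈ Set.Icc (s₀ - r' / 2) (s₀ + r' / 2), m < z s ∧ |θ s| < ε := by
      intro s hs
      apply hball
      rw [Real.dist_eq, abs_lt]
      constructor <;> [linarith [hs.1]; linarith [hs.2]]
    set K : ℝ := 4 * (1 + 2 * |b|) / (m * D) with hK
    -- forward
    have fwd : ∀ s ∈ Set.Icc s₀ (s₀ + r' / 2), θ s = 0 := by
      refine gron_zero (K := K) hθ ?_ h0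
      intro s hs
      have hs' : s ∈ Set.Icc (s₀ - r' / 2) (s₀ + r' / 2) :=
        ⟨by linarith [hs.1], hs.2⟩
      obtain ⟨ha, hb'⟩ := hsub s hs'
      exact key m hm s ha hb'
    -- backward via reflection
    have bwd : ∀ s ∈ Set.Icc (s₀ - r' / 2) s₀, θ s = 0 := by
      have hψ : ∀ t, HasDerivAt (fun u => θ (2 * s₀ - u)) (θd (2 * s₀ - t) * (-1)) t := by
        intro t
        have hlin : HasDerivAt (fun u : ℝ => 2 * s₀ - u) (-1) t := by
          simpa using (hasDerivAt_id t).const_sub (2 * s₀)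
        exact (hθ (2 * s₀ - t)).comp t hlin
      have hres := gron_zero (θ := fun u => θ (2 * s₀ - u))
        (θd := fun t => θd (2 * s₀ - t) * (-1)) (K := K)
        (a := s₀) (c := s₀ + r' / 2) hψ ?_ ?_
      · intro s hs
        have : θ (2 * s₀ - (2 * s₀ - s)) = 0 := by
          apply hres (2 * s₀ - s)
          constructor <;> [linarith [hs.2]; linarith [hs.1]]
        simpa using this
      · intro t ht
        have hmem : 2 * s₀ - t ∈ Set.Icc (s₀ - r' / 2) (s₀ + r' / 2) := by
          constructor <;> [linarith [ht.2]; linarith [ht.1]]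
        obtain ⟨ha, hb'⟩ := hsub _ hmem
        have := key m hm _ ha hb'
        simpa [abs_mul] using this
      · show θ (2 * s₀ - s₀) = 0
        rw [show 2 * s₀ - s₀ = s₀ by ring]
        exact h0
    intro s hs
    rcases le_total s s₀ with h | h
    · exact bwd s ⟨hs.1, h⟩
    · exact fwd s ⟨h, hs.2⟩
  -- clopen argument
  have hclosed : IsClosed {s : ℝ | θ s = 0} :=
    isClosed_eq hcontθ continuous_const
  have hopen : IsOpen {s : ℝ | θ s = 0} := by
    rw [isOpen_iff_mem_nhds]
    intro s₀ h0
    obtain ⟨r, hr, hloc⟩ := local_zero s₀ h0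
    exact Filter.mem_of_superset (Icc_mem_nhds (by linarith) (by linarith)) hloc
  have huniv : {s : ℝ | θ s = 0} = Set.univ :=
    IsClopen.eq_univ ⟨hclosed, hopen⟩ ⟨0, hθ0⟩
  have hall : ∀ s, θ s = 0 := fun s => by
    have : s ∈ ({s : ℝ | θ s = 0} : Set ℝ) := huniv ▸ Set.mem_univ s
    exact this
  refine ⟨hall, ?_⟩
  have hz0 : ∀ s, HasDerivAt z 0 s := fun s => by
    have := hz s; rwa [hall s, Real.sin_zero] at this
  intro s
  exact is_const_of_deriv_eq_zero (fun t => (hz0 t).differentiableAt)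
    (fun t => (hz0 t).deriv) s 0
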